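/- Let C be a nonempty, non-singleton ρ_X-convex subset of a geodesic metric space X, let f : C → Y be a Lipschitz mapping into a metric space Y, and let 0 < L < lip(f). Then there exist points u₀, u₁ ∈ C such that liminf_{t→0⁺} ρ_Y(f((1-t)u₀ ⊕ t u₁), f(u₀)) / (t ρ_X(u₀,u₁)) > L. -/

import Mathlib

open Metric Set Filter

/-- Let `C` be a nonempty, non-singleton `ρ_X`-convex subset of a geodesic
metric space `X` (each pair of points of `C` is joined by a metric segment lying in `C`),
let `f : X → Y` be Lipschitz on `C` and `0 < L < lip(f|_C)` (expressed by the existence of a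
pair of points of `C` with slope `> L`).  Then there are `u₀, u₁ ∈ C` and a metric segment
`c` from `u₀` to `u₁` inside `C` such that
`liminf_{t→0⁺} ρ_Y(f((1-t)u₀ ⊕ t u₁), f(u₀)) / (t·ρ_X(u₀,u₁)) > L`. -/
theorem stmt10 {X Y : Type*} [MetricSpace X] [MetricSpace Y]
    (C : Set X)
    (hconv : ∀ x ∈ C, ∀ y ∈ C, ∃ c : ℝ → X, c 0 = x ∧ c (dist x y) = y ∧
      (∀ s ∈ Icc (0 : ℝ) (dist x y), c s ∈ C) ∧
      ∀ s ∈ Icc (0 : ℝ) (dist x y), ∀ t ∈ Icc (0 : ℝ) (dist x y),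
        dist (c s) (c t) = |s - t|)
    (f : X → Y) (K : NNReal) (hf : LipschitzOnWith K f C)
    (L : ℝ) (hL : 0 < L)
    (hslope : ∃ x ∈ C, ∃ y ∈ C, L * dist x y < dist (f x) (f y)) :
    ∃ u₀ ∈ C, ∃ u₁ ∈ C, ∃ c : ℝ → X,
      c 0 = u₀ ∧ c (dist u₀ u₁) = u₁ ∧
      (∀ s ∈ Icc (0 : ℝ) (dist u₀ u₁), c s ∈ C) ∧
      (∀ s ∈ Icc (0 : ℝ) (dist u₀ u₁), ∀ t ∈ Icc (0 : ℝ) (dist u₀ u₁),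
        dist (c s) (c t) = |s - t|) ∧
      L < Filter.liminf
        (fun t : ℝ => dist (f (c (t * dist u₀ u₁))) (f u₀) / (t * dist u₀ u₁))
        (nhdsWithin 0 (Ioi 0)) := by
  classical
  obtain ⟨x, hx, y, hy, hxy⟩ := hslope
  have hfxy : 0 < dist (f x) (f y) :=
    lt_of_le_of_lt (by positivity) hxy
  have hd0 : (0:ℝ) < dist x y := by
    rcases (dist_nonneg (x := x) (y := y)).lt_or_eq with h | h
    · exact h
    · exfalso
      have : x = y := dist_eq_zero.1 h.symm
      rw [this] at hfxy; simp at hfxy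
  set d := dist x y with hd_def
  set L' := (L + dist (f x) (f y) / d) / 2 with hL'_def
  have hLlt : L < dist (f x) (f y) / d := (lt_div_iff₀ hd0).2 hxy
  have hL'1 : L < L' := by rw [hL'_def]; linarith
  have hL'pos : 0 < L' := hL.trans hL'1
  have hL'2 : L' * d < dist (f x) (f y) := by
    have h1 : L' < dist (f x) (f y) / d := by rw [hL'_def]; linarith
    calc L' * d < (dist (f x) (f y) / d) * d := by
          exact mul_lt_mul_of_pos_right h1 hd0
      _ = dist (f x) (f y) := div_mul_cancel₀ _ hd0.ne'
  obtain ⟨c, hc0, hcd, hcC, hiso⟩ := hconv x hx y hy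
  -- continuity of s ↦ dist (f (c s)) (f y) on Icc 0 d
  have hfc_lip : LipschitzOnWith K (f ∘ c) (Icc 0 d) := by
    apply LipschitzOnWith.of_dist_le_mul
    intro s hs t ht
    calc dist ((f ∘ c) s) ((f ∘ c) t) ≤ K * dist (c s) (c t) :=
          hf.dist_le_mul _ (hcC s hs) _ (hcC t ht)
      _ = K * dist s t := by rw [hiso s hs t ht, Real.dist_eq]
  have hcont : ContinuousOn (fun s => dist (f (c s)) (f y) - L' * (d - s)) (Icc 0 d) := by
    apply ContinuousOn.sub
    · exact (continuous_id.dist continuous_const).comp_continuousOn hfc_lip.continuousOn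
    · exact (continuous_const.mul (continuous_const.sub continuous_id)).continuousOn
  set S : Set ℝ := Icc 0 d ∩ (fun s => dist (f (c s)) (f y) - L' * (d - s)) ⁻¹' (Iic 0)
    with hS_def
  have hdS : d ∈ S := by
    constructor
    · exact ⟨hd0.le, le_rfl⟩
    · simp [hd_def, hcd]
  have hSclosed : IsClosed S :=
    hcont.preimage_isClosed_of_isClosed isClosed_Icc isClosed_Iic
  have hSbdd : BddBelow S := ⟨0, fun s hs => hs.1.1⟩
  set s₀ := sInf S with hs₀_def
  have hs₀S : s₀ ∈ S := hSclosed.csInf_mem ⟨d, hdS⟩ hSbdd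
  have hs₀Icc : s₀ ∈ Icc 0 d := hs₀S.1
  have hs₀le : dist (f (c s₀)) (f y) ≤ L' * (d - s₀) := by
    have := hs₀S.2
    simp only [mem_preimage, mem_Iic] at this
    linarith
  have hs₀pos : 0 < s₀ := by
    rcases hs₀Icc.1.lt_or_eq with h | h
    · exact h
    · exfalso
      rw [← h] at hs₀le
      rw [hc0] at hs₀le
      simp at hs₀le
      linarith
  -- strict inequality below s₀
  have hstrict : ∀ s, 0 ≤ s → s < s₀ → L' * (d - s) < dist (f (c s)) (f y) := by
    intro s hs hss
    by_contra h
    push_neg at h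
    have hsS : s ∈ S := by
      refine ⟨⟨hs, hss.le.trans hs₀Icc.2⟩, ?_⟩
      simp only [mem_preimage, mem_Iic]; linarith
    exact absurd (csInf_le hSbdd hsS) (not_le.2 hss)
  -- the new geodesic
  have hu₀C : c s₀ ∈ C := hcC s₀ hs₀Icc
  have hdist : dist (c s₀) x = s₀ := by
    rw [← hc0, hiso s₀ hs₀Icc 0 ⟨le_rfl, hd0.le⟩]
    simp [abs_of_nonneg hs₀pos.le]
  refine ⟨c s₀, hu₀C, x, hx, fun σ => c (s₀ - σ), by simp, ?_, ?_, ?_, ?_⟩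
  · rw [hdist]; simp [hc0]
  · rw [hdist]
    intro σ hσ
    exact hcC _ ⟨by linarith [hσ.2], by linarith [hσ.1, hs₀Icc.2]⟩
  · rw [hdist]
    intro σ hσ τ hτ
    rw [hiso _ ⟨by linarith [hσ.2], by linarith [hσ.1, hs₀Icc.2]⟩
         _ ⟨by linarith [hτ.2], by linarith [hτ.1, hs₀Icc.2]⟩]
    rw [show s₀ - σ - (s₀ - τ) = -(σ - τ) by ring, abs_neg]
  · rw [hdist]
    -- liminf bound
    have key : ∀ t ∈ Ioo (0:ℝ) 1,
        L' ≤ dist (f (c (s₀ - t * s₀))) (f (c s₀)) / (t * s₀) := by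
      intro t ht
      have hts : 0 < t * s₀ := mul_pos ht.1 hs₀pos
      rw [le_div_iff₀ hts]
      have h1 : s₀ - t * s₀ < s₀ := by nlinarith
      have h2 : 0 ≤ s₀ - t * s₀ := by nlinarith [mul_nonneg (sub_nonneg.2 ht.2.le) hs₀pos.le]
      have h3 := hstrict _ h2 h1
      have h4 : dist (f (c (s₀ - t * s₀))) (f y) ≤
          dist (f (c (s₀ - t * s₀))) (f (c s₀)) + dist (f (c s₀)) (f y) := dist_triangle _ _ _
      nlinarith [hs₀le]
    have hmem : Ioo (0:ℝ) 1 ∈ nhdsWithin (0:ℝ) (Ioi 0) :=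
      Ioo_mem_nhdsGT_of_mem ⟨le_rfl, one_pos⟩
    have hev : ∀ᶠ t in nhdsWithin (0:ℝ) (Ioi 0),
        L' ≤ dist (f (c (s₀ - t * s₀))) (f (c s₀)) / (t * s₀) :=
      eventually_of_mem hmem key
    have hub : ∀ᶠ t in nhdsWithin (0:ℝ) (Ioi 0),
        dist (f (c (s₀ - t * s₀))) (f (c s₀)) / (t * s₀) ≤ K := by
      apply eventually_of_mem hmem
      intro t ht
      have hts : 0 < t * s₀ := mul_pos ht.1 hs₀pos
      rw [div_le_iff₀ hts]
      have hmem1 : s₀ - t * s₀ ∈ Icc 0 d :=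
        ⟨by nlinarith [mul_nonneg (sub_nonneg.2 ht.2.le) hs₀pos.le], by nlinarith [hs₀Icc.2]⟩
      have := hf.dist_le_mul _ (hcC _ hmem1) _ (hcC s₀ hs₀Icc)
      rw [hiso _ hmem1 s₀ hs₀Icc] at this
      calc dist (f (c (s₀ - t * s₀))) (f (c s₀)) ≤ K * |s₀ - t * s₀ - s₀| := this
        _ = K * (t * s₀) := by rw [show s₀ - t * s₀ - s₀ = -(t * s₀) by ring, abs_neg,
              abs_of_pos hts]
    have hco : IsCoboundedUnder (· ≥ ·) (nhdsWithin (0:ℝ) (Ioi 0))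
        (fun t => dist (f (c (s₀ - t * s₀))) (f (c s₀)) / (t * s₀)) :=
      isCoboundedUnder_ge_of_eventually_le _ hub
    exact lt_of_lt_of_le hL'1 (le_liminf_of_le hco hev)
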